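/- arXiv:2309.00931 — 3 statements merged into one kernel-verified Lean document; each statement's English description precedes it below -/
import Mathlib

section
/- Let t¹, t² be orthonormal vectors in Euclidean three-space ℝ³, n = t¹ × t², m a unit vector, P_m v = v − ⟨v, m⟩ m, and let M be the 2×2 real matrix with entries M_{ik} = ⟨tⁱ, P_m tᵏ⟩ for i, k ∈ {1, 2}. Then |det M − 1| = 1 − ⟨n, m⟩² ≤ ‖n − m‖². -/
open scoped RealInnerProductSpace

/-- The cross product of two vectors in Euclidean three-space `ℝ³`. -/
noncomputable def cross3 (a b : EuclideanSpace ℝ (Fin 3)) : EuclideanSpace ℝ (Fin 3) :=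
  (WithLp.equiv 2 (Fin 3 → ℝ)).symm
    ![a 1 * b 2 - a 2 * b 1, a 2 * b 0 - a 0 * b 2, a 0 * b 1 - a 1 * b 0]

/-- The orthogonal projection onto the plane orthogonal to `m`:
`P_m v = v - ⟪v, m⟫ • m`. -/
noncomputable def projPlane (m v : EuclideanSpace ℝ (Fin 3)) : EuclideanSpace ℝ (Fin 3) :=
  v - ⟪v, m⟫ • m

set_option maxHeartbeats 1000000 in
/-- For orthonormal `t¹, t²` in `ℝ³` with induced unit normal `n = t¹ × t²`,
a unit vector `m`, `P_m v = v - ⟪v, m⟫ • m`, and the 2×2 matrix `M` with entries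
`M_{ik} = ⟪tⁱ, P_m tᵏ⟫`, we have `|det M − 1| = 1 − ⟪n, m⟫² ≤ ‖n − m‖²`. -/
theorem det_flattening_jacobian_close_to_one
    (t1 t2 m : EuclideanSpace ℝ (Fin 3))
    (ht1 : ‖t1‖ = 1) (ht2 : ‖t2‖ = 1) (ht12 : ⟪t1, t2⟫ = 0) (hm : ‖m‖ = 1) :
    |(!![⟪t1, projPlane m t1⟫, ⟪t1, projPlane m t2⟫;
         ⟪t2, projPlane m t1⟫, ⟪t2, projPlane m t2⟫] : Matrix (Fin 2) (Fin 2) ℝ).det - 1|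
        = 1 - ⟪cross3 t1 t2, m⟫ ^ 2 ∧
    1 - ⟪cross3 t1 t2, m⟫ ^ 2 ≤ ‖cross3 t1 t2 - m‖ ^ 2 := by
  have haa : ⟪t1, t1⟫ = 1 := by
    rw [real_inner_self_eq_norm_sq, ht1]; norm_num
  have hbb : ⟪t2, t2⟫ = 1 := by
    rw [real_inner_self_eq_norm_sq, ht2]; norm_num
  have hmm : ⟪m, m⟫ = 1 := by
    rw [real_inner_self_eq_norm_sq, hm]; norm_num
  have ht21 : ⟪t2, t1⟫ = 0 := by rw [real_inner_comm]; exact ht12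
  set α := ⟪t1, m⟫ with hα
  set β := ⟪t2, m⟫ with hβ
  set c := ⟪cross3 t1 t2, m⟫ with hc
  -- coordinate expansions
  have haa' : t1 0 * t1 0 + t1 1 * t1 1 + t1 2 * t1 2 = 1 := by
    rw [PiLp.inner_apply] at haa; simp [Fin.sum_univ_three] at haa; linear_combination haa
  have hbb' : t2 0 * t2 0 + t2 1 * t2 1 + t2 2 * t2 2 = 1 := by
    rw [PiLp.inner_apply] at hbb; simp [Fin.sum_univ_three] at hbb; linear_combination hbb
  have hmm' : m 0 * m 0 + m 1 * m 1 + m 2 * m 2 = 1 := by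
    rw [PiLp.inner_apply] at hmm; simp [Fin.sum_univ_three] at hmm; linear_combination hmm
  have hab' : t1 0 * t2 0 + t1 1 * t2 1 + t1 2 * t2 2 = 0 := by
    rw [PiLp.inner_apply] at ht12; simp [Fin.sum_univ_three] at ht12; linear_combination ht12
  have hαc : α = t1 0 * m 0 + t1 1 * m 1 + t1 2 * m 2 := by
    simp [hα, PiLp.inner_apply, Fin.sum_univ_three]; ring
  have hβc : β = t2 0 * m 0 + t2 1 * m 1 + t2 2 * m 2 := by
    simp [hβ, PiLp.inner_apply, Fin.sum_univ_three]; ring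
  have hcc : c = (t1 1 * t2 2 - t1 2 * t2 1) * m 0 + (t1 2 * t2 0 - t1 0 * t2 2) * m 1
      + (t1 0 * t2 1 - t1 1 * t2 0) * m 2 := by
    simp [hc, cross3, PiLp.inner_apply, Fin.sum_univ_three]; ring
  have hnn : ⟪cross3 t1 t2, cross3 t1 t2⟫ = 1 := by
    rw [show ⟪cross3 t1 t2, cross3 t1 t2⟫ =
        (t1 1 * t2 2 - t1 2 * t2 1) ^ 2 + (t1 2 * t2 0 - t1 0 * t2 2) ^ 2
        + (t1 0 * t2 1 - t1 1 * t2 0) ^ 2 by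
      rw [PiLp.inner_apply]; simp [cross3, PiLp.inner_apply, Fin.sum_univ_three]]
    linear_combination (t2 0 * t2 0 + t2 1 * t2 1 + t2 2 * t2 2) * haa' + hbb'
      - (t1 0 * t2 0 + t1 1 * t2 1 + t1 2 * t2 2) * hab'
  have hkey : c ^ 2 = 1 - α ^ 2 - β ^ 2 := by
    rw [hcc, hαc, hβc]
    linear_combination ((t2 0 * t2 0 + t2 1 * t2 1 + t2 2 * t2 2) *
        (m 0 * m 0 + m 1 * m 1 + m 2 * m 2)
        - (t2 0 * m 0 + t2 1 * m 1 + t2 2 * m 2) ^ 2) * haa'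
      + ((m 0 * m 0 + m 1 * m 1 + m 2 * m 2)
        - (t1 0 * m 0 + t1 1 * m 1 + t1 2 * m 2) ^ 2) * hbb' + hmm'
      + (2 * (t1 0 * m 0 + t1 1 * m 1 + t1 2 * m 2) * (t2 0 * m 0 + t2 1 * m 1 + t2 2 * m 2)
        - (m 0 * m 0 + m 1 * m 1 + m 2 * m 2) * (t1 0 * t2 0 + t1 1 * t2 1 + t1 2 * t2 2)) * hab'
  have hdet : (!![⟪t1, projPlane m t1⟫, ⟪t1, projPlane m t2⟫;
         ⟪t2, projPlane m t1⟫, ⟪t2, projPlane m t2⟫] : Matrix (Fin 2) (Fin 2) ℝ).det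
      = 1 - α ^ 2 - β ^ 2 := by
    simp only [projPlane, inner_sub_right, real_inner_smul_right, Matrix.det_fin_two_of,
      haa, hbb, ht12, ht21, ← hα, ← hβ]
    ring
  have hnorm : ‖cross3 t1 t2 - m‖ ^ 2 = 2 - 2 * c := by
    rw [← real_inner_self_eq_norm_sq]
    have hmc : ⟪m, cross3 t1 t2⟫ = c := by rw [real_inner_comm]
    simp only [inner_sub_left, inner_sub_right, hnn, hmm, hmc, ← hc]
    ring
  clear_value α β c
  constructor
  · rw [hdet, hkey]
    rw [abs_of_nonpos (by nlinarith [sq_nonneg α, sq_nonneg β])]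
    ring
  · rw [hnorm]; nlinarith [sq_nonneg (1 - c)]
end

section
/- Let t¹, t² be orthonormal vectors in Euclidean three-space ℝ³, n = t¹ × t², m a unit vector, P_m v = v − ⟨v, m⟩ m, and let M be the 2×2 real matrix with entries M_{ik} = ⟨tⁱ, P_m tᵏ⟩ for i, k ∈ {1, 2}. If ⟨tⁱ, n⟩ = 0 for i = 1, 2 (which holds automatically since n = t¹ × t²), then every entry of M − I satisfies |M_{ik} − δ_{ik}| ≤ ‖n − m‖² for i, k ∈ {1, 2}, where δ_{ik} is the Kronecker delta; in particular the operator norm satisfies ‖M − I‖ ≤ 2‖n − m‖². -/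
open scoped RealInnerProductSpace

lemma norm_sq_fin2 (v : EuclideanSpace ℝ (Fin 2)) : ‖v‖ ^ 2 = v 0 ^ 2 + v 1 ^ 2 := by
  rw [EuclideanSpace.norm_eq, Real.sq_sqrt (by positivity)]
  simp [Fin.sum_univ_two, sq_abs]

lemma norm_le_of_sq_le_sq' {v x : EuclideanSpace ℝ (Fin 2)} {K : ℝ} (hK : 0 ≤ K)
    (h : ‖v‖ ^ 2 ≤ (K * ‖x‖) ^ 2) : ‖v‖ ≤ K * ‖x‖ := by
  nlinarith [norm_nonneg v, mul_nonneg hK (norm_nonneg x)]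

set_option maxHeartbeats 800000 in
/-- For orthonormal `t¹, t²` in `ℝ³` with induced unit normal `n = t¹ × t²`,
a unit vector `m`, `P_m v = v - ⟪v, m⟫ • m`, and the 2×2 matrix `M` with entries
`M_{ik} = ⟪tⁱ, P_m tᵏ⟫`: if `⟪tⁱ, n⟫ = 0` for `i = 1, 2`, then every entry of `M − I`
satisfies `|M_{ik} − δ_{ik}| ≤ ‖n − m‖²`, and the operator norm satisfies
`‖M − I‖ ≤ 2‖n − m‖²`. -/
theorem flattening_jacobian_close_to_id
    (t1 t2 m : EuclideanSpace ℝ (Fin 3))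
    (ht1 : ‖t1‖ = 1) (ht2 : ‖t2‖ = 1) (ht12 : ⟪t1, t2⟫ = 0) (hm : ‖m‖ = 1)
    (ht1n : ⟪t1, cross3 t1 t2⟫ = 0) (ht2n : ⟪t2, cross3 t1 t2⟫ = 0) :
    (∀ i k : Fin 2,
      |(!![⟪t1, projPlane m t1⟫, ⟪t1, projPlane m t2⟫;
           ⟪t2, projPlane m t1⟫, ⟪t2, projPlane m t2⟫] : Matrix (Fin 2) (Fin 2) ℝ) i k
          - (1 : Matrix (Fin 2) (Fin 2) ℝ) i k|
        ≤ ‖cross3 t1 t2 - m‖ ^ 2) ∧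
    ‖Matrix.toEuclideanCLM (𝕜 := ℝ) (n := Fin 2)
        ((!![⟪t1, projPlane m t1⟫, ⟪t1, projPlane m t2⟫;
             ⟪t2, projPlane m t1⟫, ⟪t2, projPlane m t2⟫] : Matrix (Fin 2) (Fin 2) ℝ)
          - 1)‖
      ≤ 2 * ‖cross3 t1 t2 - m‖ ^ 2 := by
  set a := ⟪t1, m⟫ with ha
  set b := ⟪t2, m⟫ with hb
  set c := ⟪cross3 t1 t2, m⟫ with hc
  -- coordinate versions of the hypotheses
  have h1 : t1 0 * t1 0 + t1 1 * t1 1 + t1 2 * t1 2 = 1 := by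
    have := real_inner_self_eq_norm_sq t1
    rw [ht1] at this
    simp only [PiLp.inner_apply, Fin.sum_univ_three, Real.inner_apply] at this
    linear_combination this
  have h2 : t2 0 * t2 0 + t2 1 * t2 1 + t2 2 * t2 2 = 1 := by
    have := real_inner_self_eq_norm_sq t2
    rw [ht2] at this
    simp only [PiLp.inner_apply, Fin.sum_univ_three, Real.inner_apply] at this
    linear_combination this
  have h4 : m 0 * m 0 + m 1 * m 1 + m 2 * m 2 = 1 := by
    have := real_inner_self_eq_norm_sq m
    rw [hm] at this
    simp only [PiLp.inner_apply, Fin.sum_univ_three, Real.inner_apply] at this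
    linear_combination this
  have h3 : t1 0 * t2 0 + t1 1 * t2 1 + t1 2 * t2 2 = 0 := by
    have := ht12
    simp only [PiLp.inner_apply, Fin.sum_univ_three, Real.inner_apply] at this
    linear_combination this
  have ha' : a = t1 0 * m 0 + t1 1 * m 1 + t1 2 * m 2 := by
    simp [ha, PiLp.inner_apply, Fin.sum_univ_three]
    ring
  have hb' : b = t2 0 * m 0 + t2 1 * m 1 + t2 2 * m 2 := by
    simp [hb, PiLp.inner_apply, Fin.sum_univ_three]
    ring
  have hc' : c = (t1 1 * t2 2 - t1 2 * t2 1) * m 0 + (t1 2 * t2 0 - t1 0 * t2 2) * m 1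
      + (t1 0 * t2 1 - t1 1 * t2 0) * m 2 := by
    simp [hc, cross3, PiLp.inner_apply, Fin.sum_univ_three]
    ring
  -- the Gram determinant identity : c² = 1 - a² - b²
  have hc2 : c ^ 2 = 1 - a ^ 2 - b ^ 2 := by
    rw [ha', hb', hc']
    linear_combination
      ((t2 0 * t2 0 + t2 1 * t2 1 + t2 2 * t2 2) * (m 0 * m 0 + m 1 * m 1 + m 2 * m 2)
        - (t2 0 * m 0 + t2 1 * m 1 + t2 2 * m 2) ^ 2) * h1
      + ((m 0 * m 0 + m 1 * m 1 + m 2 * m 2)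
        - (t1 0 * m 0 + t1 1 * m 1 + t1 2 * m 2) ^ 2) * h2
      + (2 * (t1 0 * m 0 + t1 1 * m 1 + t1 2 * m 2) * (t2 0 * m 0 + t2 1 * m 1 + t2 2 * m 2)
        - (m 0 * m 0 + m 1 * m 1 + m 2 * m 2)
          * (t1 0 * t2 0 + t1 1 * t2 1 + t1 2 * t2 2)) * h3
      + h4
  -- the normal is a unit vector (Lagrange identity)
  have hnn : ⟪cross3 t1 t2, cross3 t1 t2⟫ = 1 := by
    simp only [cross3, PiLp.inner_apply, Fin.sum_univ_three]
    simp only [WithLp.equiv_symm_apply, PiLp.toLp_apply, Matrix.cons_val_zero, Matrix.cons_val_one,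
      Matrix.head_cons, Matrix.cons_val_two, Matrix.tail_cons, RCLike.inner_apply, conj_trivial]
    linear_combination (t2 0 * t2 0 + t2 1 * t2 1 + t2 2 * t2 2) * h1 + h2
      - (t1 0 * t2 0 + t1 1 * t2 1 + t1 2 * t2 2) * h3
  have hnm : ‖cross3 t1 t2 - m‖ ^ 2 = 2 - 2 * c := by
    rw [norm_sub_sq_real, ← real_inner_self_eq_norm_sq, hnn, hm, ← hc]
    ring
  -- entries of M
  have hM00 : ⟪t1, projPlane m t1⟫ = 1 - a * a := by
    rw [projPlane, inner_sub_right, real_inner_smul_right, real_inner_self_eq_norm_sq, ht1,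
      ← ha]
    ring
  have hM01 : ⟪t1, projPlane m t2⟫ = -(a * b) := by
    rw [projPlane, inner_sub_right, real_inner_smul_right, ht12, ← ha, ← hb]
    ring
  have hM10 : ⟪t2, projPlane m t1⟫ = -(a * b) := by
    have ht21 : ⟪t2, t1⟫ = 0 := by rw [real_inner_comm]; exact ht12
    rw [projPlane, inner_sub_right, real_inner_smul_right, ht21, ← ha, ← hb]
    ring
  have hM11 : ⟪t2, projPlane m t2⟫ = 1 - b * b := by
    rw [projPlane, inner_sub_right, real_inner_smul_right, real_inner_self_eq_norm_sq, ht2,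
      ← hb]
    ring
  clear ha' hb' hc' h1 h2 h3 h4 hnn ht1n ht2n
  have h2c : (0:ℝ) ≤ 2 - 2 * c := by nlinarith [hc2, sq_nonneg a, sq_nonneg b, sq_nonneg c]
  have hle : a ^ 2 + b ^ 2 ≤ 2 - 2 * c := by nlinarith [hc2, sq_nonneg (1 - c)]
  constructor
  · intro i k
    rw [hnm, hM00, hM01, hM10, hM11]
    fin_cases i <;> fin_cases k <;>
      · simp [Matrix.one_apply, abs_le]
        first
          | constructor <;>
              nlinarith [hc2, sq_nonneg (1 - c), sq_nonneg a, sq_nonneg b, sq_nonneg (a - b),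
                sq_nonneg (a + b)]
          | nlinarith [hc2, sq_nonneg (1 - c), sq_nonneg a, sq_nonneg b, sq_nonneg (a - b),
              sq_nonneg (a + b), sq_nonneg (|a| - |b|), sq_abs a, sq_abs b]
  · have hMat : (!![⟪t1, projPlane m t1⟫, ⟪t1, projPlane m t2⟫;
           ⟪t2, projPlane m t1⟫, ⟪t2, projPlane m t2⟫] : Matrix (Fin 2) (Fin 2) ℝ) - 1
        = !![-(a * a), -(a * b); -(a * b), -(b * b)] := by
      rw [hM00, hM01, hM10, hM11]
      ext i k
      fin_cases i <;> fin_cases k <;>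
        simp [Matrix.one_apply] <;> ring
    rw [hMat, hnm]
    apply ContinuousLinearMap.opNorm_le_bound _ (by linarith)
    intro x
    have hy0 : (Matrix.toEuclideanCLM (𝕜 := ℝ) (n := Fin 2)
        (!![-(a * a), -(a * b); -(a * b), -(b * b)] : Matrix (Fin 2) (Fin 2) ℝ) x) 0
        = -(a * a) * x 0 + -(a * b) * x 1 := by
      have := congrFun (Matrix.ofLp_toEuclideanCLM (𝕜 := ℝ) (n := Fin 2)
        (!![-(a * a), -(a * b); -(a * b), -(b * b)]) x) 0
      simpa [Matrix.mulVec, dotProduct, Fin.sum_univ_two] using this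
    have hy1 : (Matrix.toEuclideanCLM (𝕜 := ℝ) (n := Fin 2)
        (!![-(a * a), -(a * b); -(a * b), -(b * b)] : Matrix (Fin 2) (Fin 2) ℝ) x) 1
        = -(a * b) * x 0 + -(b * b) * x 1 := by
      have := congrFun (Matrix.ofLp_toEuclideanCLM (𝕜 := ℝ) (n := Fin 2)
        (!![-(a * a), -(a * b); -(a * b), -(b * b)]) x) 1
      simpa [Matrix.mulVec, dotProduct, Fin.sum_univ_two] using this
    apply norm_le_of_sq_le_sq' (by linarith)
    rw [mul_pow, norm_sq_fin2, norm_sq_fin2, hy0, hy1]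
    nlinarith [sq_nonneg (a * x 1 - b * x 0), sq_nonneg (a * x 0 + b * x 1),
      sq_nonneg (x 0), sq_nonneg (x 1), sq_nonneg a, sq_nonneg b, hle, h2c,
      mul_le_mul_of_nonneg_right (mul_self_le_mul_self (by positivity : (0:ℝ) ≤ a^2+b^2) hle)
        (by positivity : (0:ℝ) ≤ x 0 ^ 2 + x 1 ^ 2),
      mul_le_mul_of_nonneg_left
        (by nlinarith [sq_nonneg (a * x 1 - b * x 0)] :
          (a * x 0 + b * x 1) ^ 2 ≤ (a^2+b^2) * (x 0 ^2 + x 1 ^2))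
        (by positivity : (0:ℝ) ≤ a^2+b^2)]
end

section
/- Let t¹, t² be orthonormal vectors in Euclidean three-space ℝ³, n = t¹ × t², m a unit vector, P_m v = v − ⟨v, m⟩ m, and set c = ‖P_m t¹ × P_m t²‖. Then 1 − c⟨n, m⟩ = ½(⟨t¹, m⟩² + ⟨t², m⟩²) + ½‖n − c m‖². -/
open scoped RealInnerProductSpace

/-- Lagrange's identity for the cross product in `ℝ³`. -/
lemma cross3_norm_sq (u v : EuclideanSpace ℝ (Fin 3)) :
    ‖cross3 u v‖ ^ 2 = ‖u‖ ^ 2 * ‖v‖ ^ 2 - ⟪u, v⟫ ^ 2 := by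
  have h : ∀ w : EuclideanSpace ℝ (Fin 3), ‖w‖ ^ 2 = ⟪w, w⟫ := fun w =>
    (real_inner_self_eq_norm_sq w).symm
  rw [h, h, h]
  simp only [cross3, PiLp.inner_apply, Fin.sum_univ_three, WithLp.equiv_symm_apply, PiLp.toLp_apply,
    Matrix.cons_val_zero, Matrix.cons_val_one, Matrix.head_cons, Matrix.cons_val_two,
    Matrix.tail_cons, RCLike.inner_apply, conj_trivial]
  ring

lemma proj_inner (m v w : EuclideanSpace ℝ (Fin 3)) (hm : ‖m‖ = 1) :
    ⟪projPlane m v, projPlane m w⟫ = ⟪v, w⟫ - ⟪v, m⟫ * ⟪w, m⟫ := by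
  have hmm : ⟪m, m⟫ = (1 : ℝ) := by
    rw [real_inner_self_eq_norm_sq, hm]; norm_num
  simp only [projPlane, inner_sub_left, inner_sub_right, real_inner_smul_left,
    real_inner_smul_right, hmm, real_inner_comm w m]
  ring

/-- For orthonormal `t¹, t²` in `ℝ³` with induced unit normal `n = t¹ × t²`,
a unit vector `m`, `P_m v = v - ⟪v, m⟫ • m`, and `c = ‖P_m t¹ × P_m t²‖`, we have the
exact identity `1 − c⟪n, m⟫ = ½(⟪t¹, m⟫² + ⟪t², m⟫²) + ½‖n − c • m‖²`. -/
theorem integration_element_identity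
    (t1 t2 m : EuclideanSpace ℝ (Fin 3))
    (ht1 : ‖t1‖ = 1) (ht2 : ‖t2‖ = 1) (ht12 : ⟪t1, t2⟫ = 0) (hm : ‖m‖ = 1) :
    1 - ‖cross3 (projPlane m t1) (projPlane m t2)‖ * ⟪cross3 t1 t2, m⟫
      = (1 / 2) * (⟪t1, m⟫ ^ 2 + ⟪t2, m⟫ ^ 2)
        + (1 / 2) * ‖cross3 t1 t2
            - ‖cross3 (projPlane m t1) (projPlane m t2)‖ • m‖ ^ 2 := by
  set a := ⟪t1, m⟫ with ha
  set b := ⟪t2, m⟫ with hb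
  set c := ‖cross3 (projPlane m t1) (projPlane m t2)‖ with hc
  set n := cross3 t1 t2 with hn
  -- c² = 1 - a² - b²
  have hP1 : ‖projPlane m t1‖ ^ 2 = 1 - a ^ 2 := by
    rw [← real_inner_self_eq_norm_sq, proj_inner _ _ _ hm,
      real_inner_self_eq_norm_sq, ht1]; ring
  have hP2 : ‖projPlane m t2‖ ^ 2 = 1 - b ^ 2 := by
    rw [← real_inner_self_eq_norm_sq, proj_inner _ _ _ hm,
      real_inner_self_eq_norm_sq, ht2]; ring
  have hP12 : ⟪projPlane m t1, projPlane m t2⟫ = -(a * b) := by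
    rw [proj_inner _ _ _ hm, ht12]; ring
  have hc2 : c ^ 2 = 1 - a ^ 2 - b ^ 2 := by
    rw [hc, cross3_norm_sq, hP1, hP2, hP12]; ring
  -- ‖n‖² = 1
  have hn2 : ‖n‖ ^ 2 = 1 := by
    rw [hn, cross3_norm_sq, ht1, ht2, ht12]; ring
  -- expand ‖n - c • m‖²
  have hmm : ⟪m, m⟫ = (1 : ℝ) := by
    rw [real_inner_self_eq_norm_sq, hm]; norm_num
  have hnn : ⟪n, n⟫ = (1 : ℝ) := by
    rw [real_inner_self_eq_norm_sq]; exact hn2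
  have hexp : ‖n - c • m‖ ^ 2 = 1 - 2 * c * ⟪n, m⟫ + c ^ 2 := by
    rw [← real_inner_self_eq_norm_sq]
    simp only [inner_sub_left, inner_sub_right, real_inner_smul_left, real_inner_smul_right,
      hnn, hmm, real_inner_comm m n]
    ring
  rw [hexp, hc2]; ring
end
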